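/- Let D ⊂ ℝ^d be a bounded measurable set, p ∈ (0,1), u_a, u_b ∈ L²(D) with u_a < 0 < u_b a.e., C := {u ∈ L²(D) | u_a ≤ u ≤ u_b a.e.}, and ū ∈ C. Suppose η, ξ_k, μ_k, u_k, u'_k ∈ L²(D) satisfy, after passing to subsequences realizing pointwise a.e. convergence: u_k(ω) → ū(ω), u'_k(ω) → ū(ω), and (ξ_k + μ_k)(ω) → η(ω) a.e., where ξ_k = p|u_k|^{p−2}u_k a.e. on {u_k ≠ 0}, μ_k ≤ 0 a.e. on {u'_k < u_b}, and μ_k ≥ 0 a.e. on {u_a < u'_k}. Then: η ≤ p|ū|^{p−2}ū a.e. on {ū = u_a}, η ≥ p|ū|^{p−2}ū a.e. on {ū = u_b}, and η = p|ū|^{p−2}ū a.e. on {ū ≠ 0} ∩ {u_a < ū < u_b}. -/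

import Mathlib

open Filter MeasureTheory Set Topology

/-- Pointwise a.e. core of Lemma 6.15 (uniform qualification condition for the
sparsity-promoting optimal control problem). Let `D ⊆ ℝ^d` be a bounded measurable
set, `p ∈ (0, 1)`, `u_a < 0 < u_b` a.e. on `D`, `ū` feasible (`u_a ≤ ū ≤ u_b` a.e.),
all functions square integrable over `D`. Suppose a.e. `u_k → ū`, `u'_k → ū`,
`ξ_k + μ_k → η` pointwise, where `ξ_k = p|u_k|^{p-2}u_k` on `{u_k ≠ 0}`,
`μ_k ≤ 0` on `{u'_k < u_b}` and `μ_k ≥ 0` on `{u_a < u'_k}`. Then a.e.: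
`η ≤ p|ū|^{p-2}ū` on `{ū = u_a}`, `η ≥ p|ū|^{p-2}ū` on `{ū = u_b}`, and
`η = p|ū|^{p-2}ū` on `{ū ≠ 0} ∩ {u_a < ū < u_b}`. -/
theorem sparse_control_uniform_qualification_pointwise
    (d : ℕ) (D : Set (EuclideanSpace ℝ (Fin d)))
    (hDb : Bornology.IsBounded D) (hDm : MeasurableSet D)
    (μmeas : Measure (EuclideanSpace ℝ (Fin d)))
    (hμ : μmeas = MeasureTheory.volume.restrict D)
    (p : ℝ) (hp0 : 0 < p) (hp1 : p < 1)
    (ua ub ubar η : EuclideanSpace ℝ (Fin d) → ℝ)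
    (u u' ξ ν : ℕ → EuclideanSpace ℝ (Fin d) → ℝ)
    (hua : MeasureTheory.MemLp ua 2 μmeas) (hub : MeasureTheory.MemLp ub 2 μmeas)
    (hubar : MeasureTheory.MemLp ubar 2 μmeas) (hη : MeasureTheory.MemLp η 2 μmeas)
    (hu : ∀ k, MeasureTheory.MemLp (u k) 2 μmeas)
    (hu' : ∀ k, MeasureTheory.MemLp (u' k) 2 μmeas)
    (hξ : ∀ k, MeasureTheory.MemLp (ξ k) 2 μmeas)
    (hν : ∀ k, MeasureTheory.MemLp (ν k) 2 μmeas)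
    (hbounds : ∀ᵐ ω ∂μmeas, ua ω < 0 ∧ 0 < ub ω)
    (hfeas : ∀ᵐ ω ∂μmeas, ua ω ≤ ubar ω ∧ ubar ω ≤ ub ω)
    (hconv : ∀ᵐ ω ∂μmeas,
      Filter.Tendsto (fun k => u k ω) Filter.atTop (nhds (ubar ω)) ∧
      Filter.Tendsto (fun k => u' k ω) Filter.atTop (nhds (ubar ω)) ∧
      Filter.Tendsto (fun k => ξ k ω + ν k ω) Filter.atTop (nhds (η ω)))
    (hstruct : ∀ᵐ ω ∂μmeas, ∀ k,
      (u k ω ≠ 0 → ξ k ω = p * |u k ω| ^ (p - 2) * u k ω) ∧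
      (u' k ω < ub ω → ν k ω ≤ 0) ∧
      (ua ω < u' k ω → 0 ≤ ν k ω)) :
    ∀ᵐ ω ∂μmeas,
      (ubar ω = ua ω → η ω ≤ p * |ubar ω| ^ (p - 2) * ubar ω) ∧
      (ubar ω = ub ω → p * |ubar ω| ^ (p - 2) * ubar ω ≤ η ω) ∧
      (ubar ω ≠ 0 → ua ω < ubar ω → ubar ω < ub ω →
        η ω = p * |ubar ω| ^ (p - 2) * ubar ω) := by
  filter_upwards [hbounds, hfeas, hconv, hstruct] with ω hb hf hc hs
  obtain ⟨hcu, hcu', hcξν⟩ := hc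
  set L := p * |ubar ω| ^ (p - 2) * ubar ω with hL
  have heventξ : ubar ω ≠ 0 → Tendsto (fun k => ξ k ω) atTop (𝓝 L) := by
    intro hne
    have key : Tendsto (fun k => p * |u k ω| ^ (p - 2) * u k ω) atTop (𝓝 L) :=
      (tendsto_const_nhds.mul ((hcu.abs).rpow_const (Or.inl (abs_ne_zero.2 hne)))).mul hcu
    refine key.congr' ?_
    filter_upwards [hcu.eventually_ne hne] with k hk
    exact ((hs k).1 hk).symm
  refine ⟨?_, ?_, ?_⟩
  · intro h
    have hne : ubar ω ≠ 0 := by rw [h]; exact hb.1.ne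
    have hlt : ubar ω < ub ω := by rw [h]; exact hb.1.trans hb.2
    have hev : ∀ᶠ k in atTop, ξ k ω + ν k ω ≤ ξ k ω := by
      filter_upwards [hcu'.eventually_lt_const hlt] with k hk
      have := (hs k).2.1 hk
      linarith
    exact le_of_tendsto_of_tendsto hcξν (heventξ hne) hev
  · intro h
    have hne : ubar ω ≠ 0 := by rw [h]; exact hb.2.ne'
    have hlt : ua ω < ubar ω := by rw [h]; exact hb.1.trans hb.2
    have hev : ∀ᶠ k in atTop, ξ k ω ≤ ξ k ω + ν k ω := by
      filter_upwards [hcu'.eventually_const_lt hlt] with k hk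
      have := (hs k).2.2 hk
      linarith
    exact le_of_tendsto_of_tendsto (heventξ hne) hcξν hev
  · intro hne hlt1 hlt2
    have hev : (fun k => ξ k ω + ν k ω) =ᶠ[atTop] fun k => ξ k ω := by
      filter_upwards [hcu'.eventually_const_lt hlt1, hcu'.eventually_lt_const hlt2]
        with k h1 h2
      have := (hs k).2.1 h2
      have := (hs k).2.2 h1
      have : ν k ω = 0 := le_antisymm ‹ν k ω ≤ 0› ‹0 ≤ ν k ω›
      simp [this]
    exact tendsto_nhds_unique hcξν ((heventξ hne).congr' hev.symm)
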